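/- For every ℓ with 0 < ℓ < 2·arsinh(1) and every s ∈ [−X(ℓ), X(ℓ)], the conformal factor ρ_ℓ(s) = ℓ/(2π·cos(ℓ·s/(2π))) satisfies ρ_ℓ(s) ≤ ℓ/(2π·tanh(ℓ/2)), and moreover 1/π < ℓ/(2π·tanh(ℓ/2)) < (√2·arsinh(1))/π. -/

import Mathlib

open Real Set

/-- Half-length of the hyperbolic collar around a geodesic of length `ℓ`. -/
noncomputable def collarX (ℓ : ℝ) : ℝ :=
  2 * Real.pi / ℓ * (Real.pi / 2 - Real.arctan (Real.sinh (ℓ / 2)))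

/-- Conformal factor of the hyperbolic collar. -/
noncomputable def collarRho (ℓ s : ℝ) : ℝ :=
  ℓ / (2 * Real.pi * Real.cos (ℓ * s / (2 * Real.pi)))

lemma aux_sinh_lt_self_mul_cosh {x : ℝ} (hx : 0 < x) : Real.sinh x < x * Real.cosh x := by
  have hmono : StrictMonoOn (fun t : ℝ => t * Real.cosh t - Real.sinh t) (Ici 0) := by
    apply strictMonoOn_of_deriv_pos (convex_Ici 0)
    · fun_prop
    · intro y hy
      rw [interior_Ici] at hy
      have hd : HasDerivAt (fun t : ℝ => t * Real.cosh t - Real.sinh t)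
          ((1 * Real.cosh y + y * Real.sinh y) - Real.cosh y) y :=
        ((hasDerivAt_id y).mul (Real.hasDerivAt_cosh y)).sub (Real.hasDerivAt_sinh y)
      rw [hd.deriv]
      have h1 := Real.sinh_pos_iff.mpr hy
      have hy' : (0:ℝ) < y := hy
      nlinarith [mul_pos hy' h1]
  have h := hmono (self_mem_Ici) (le_of_lt hx : (0:ℝ) ≤ x) hx
  simpa using h

lemma aux_self_lt_sinh_mul_cosh {x : ℝ} (hx : 0 < x) : x < Real.sinh x * Real.cosh x := by
  have h1 : x < Real.sinh x := Real.self_lt_sinh_iff.mpr hx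
  have h2 : 1 ≤ Real.cosh x := Real.one_le_cosh x
  nlinarith [Real.sinh_pos_iff.mpr hx]

lemma aux_strictMono : StrictMonoOn (fun t : ℝ => t * Real.cosh t / Real.sinh t) (Ioi 0) := by
  apply strictMonoOn_of_deriv_pos (convex_Ioi 0)
  · exact ((continuous_id.mul Real.continuous_cosh).continuousOn).div
      Real.continuous_sinh.continuousOn (fun y hy => (Real.sinh_pos_iff.mpr hy).ne')
  · intro y hy
    rw [interior_Ioi] at hy
    have hs : Real.sinh y ≠ 0 := (Real.sinh_pos_iff.mpr hy).ne'
    have hd : HasDerivAt (fun t : ℝ => t * Real.cosh t / Real.sinh t)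
        (((1 * Real.cosh y + y * Real.sinh y) * Real.sinh y -
          y * Real.cosh y * Real.cosh y) / Real.sinh y ^ 2) y :=
      (((hasDerivAt_id y).mul (Real.hasDerivAt_cosh y))).div (Real.hasDerivAt_sinh y) hs
    rw [hd.deriv]
    have hnum : (1 * Real.cosh y + y * Real.sinh y) * Real.sinh y -
        y * Real.cosh y * Real.cosh y = Real.sinh y * Real.cosh y - y := by
      have h := Real.cosh_sq y
      linear_combination (-y) * h
    rw [hnum]
    exact div_pos (sub_pos.mpr (aux_self_lt_sinh_mul_cosh hy)) (pow_pos (Real.sinh_pos_iff.mpr hy) 2)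

/-- The conformal factor `ρ_ℓ` is bounded by `ℓ/(2π·tanh(ℓ/2))`, which lies in
`(1/π, √2·arsinh(1)/π)` for `0 < ℓ < 2·arsinh 1`. -/
theorem collarRho_range (ℓ : ℝ) (h0 : 0 < ℓ) (h1 : ℓ < 2 * Real.arsinh 1) :
    (∀ s ∈ Set.Icc (-(collarX ℓ)) (collarX ℓ),
      collarRho ℓ s ≤ ℓ / (2 * Real.pi * Real.tanh (ℓ / 2))) ∧
    1 / Real.pi < ℓ / (2 * Real.pi * Real.tanh (ℓ / 2)) ∧
    ℓ / (2 * Real.pi * Real.tanh (ℓ / 2)) < Real.sqrt 2 * Real.arsinh 1 / Real.pi := by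
  have hpi := Real.pi_pos
  set t := ℓ / 2 with ht_def
  have ht : 0 < t := by positivity
  have hsinh : 0 < Real.sinh t := Real.sinh_pos_iff.mpr ht
  have hcosh : 0 < Real.cosh t := Real.cosh_pos t
  have htanh_eq : Real.tanh t = Real.sinh t / Real.cosh t := Real.tanh_eq_sinh_div_cosh t
  have htanh : 0 < Real.tanh t := by rw [htanh_eq]; positivity
  -- cos (π/2 - arctan (sinh t)) = tanh t
  have hcos_eq : Real.cos (Real.pi / 2 - Real.arctan (Real.sinh t)) = Real.tanh t := by
    rw [Real.cos_pi_div_two_sub, Real.sin_arctan, htanh_eq]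
    congr 1
    rw [show (1 : ℝ) + Real.sinh t ^ 2 = Real.cosh t ^ 2 by rw [Real.cosh_sq]; ring,
      Real.sqrt_sq hcosh.le]
  constructor
  · intro s hs
    have hXnonneg : ℓ * collarX ℓ / (2 * Real.pi) = Real.pi / 2 - Real.arctan (Real.sinh t) := by
      unfold collarX
      field_simp
      ring
    have harctan_pos : 0 < Real.arctan (Real.sinh t) := by simpa using Real.arctan_strictMono hsinh
    have hhalf : Real.pi / 2 - Real.arctan (Real.sinh t) ≤ Real.pi := by
      nlinarith [by simpa using Real.arctan_strictMono hsinh]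
    have hxabs : |ℓ * s / (2 * Real.pi)| ≤ Real.pi / 2 - Real.arctan (Real.sinh t) := by
      rw [← hXnonneg]
      rw [abs_div, abs_of_pos (by positivity : (0:ℝ) < 2 * Real.pi), abs_mul,
        abs_of_pos h0]
      apply div_le_div_of_nonneg_right _ (by positivity)
      exact mul_le_mul_of_nonneg_left (abs_le.mpr hs) h0.le
    have hcos_ge : Real.tanh t ≤ Real.cos (ℓ * s / (2 * Real.pi)) := by
      rw [← Real.cos_abs, ← hcos_eq]
      exact Real.cos_le_cos_of_nonneg_of_le_pi (abs_nonneg _) hhalf hxabs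
    unfold collarRho
    apply div_le_div_of_nonneg_left h0.le (by positivity)
    exact mul_le_mul_of_nonneg_left hcos_ge (by positivity)
  constructor
  · -- 1/π < ℓ/(2π tanh t), since tanh t < t and ℓ = 2t
    have htanh_lt : Real.tanh t < t := by
      rw [htanh_eq, div_lt_iff₀ hcosh]
      exact aux_sinh_lt_self_mul_cosh ht
    have : ℓ / (2 * Real.pi * t) < ℓ / (2 * Real.pi * Real.tanh t) := by
      apply div_lt_div_of_pos_left h0 (by positivity)
      exact mul_lt_mul_of_pos_left htanh_lt (by positivity)
    calc 1 / Real.pi = ℓ / (2 * Real.pi * t) := by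
          rw [ht_def]; field_simp
      _ < _ := this
  · -- upper bound via monotonicity of t ↦ t cosh t / sinh t
    set a := Real.arsinh 1 with ha_def
    have ha : 0 < a := by
      rw [ha_def]; exact Real.arsinh_pos_iff.mpr one_pos
    have hta : t < a := by rw [ht_def]; linarith
    have hmono := aux_strictMono (mem_Ioi.mpr ht) (mem_Ioi.mpr (ht.trans hta)) hta
    have hfa : a * Real.cosh a / Real.sinh a = Real.sqrt 2 * a := by
      rw [ha_def, Real.sinh_arsinh, Real.cosh_arsinh]
      norm_num
      ring
    have hlhs : ℓ / (2 * Real.pi * Real.tanh t) = (t * Real.cosh t / Real.sinh t) / Real.pi := by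
      rw [htanh_eq, ht_def]
      field_simp
    rw [hlhs]
    have hlt : t * Real.cosh t / Real.sinh t < Real.sqrt 2 * a := by
      calc t * Real.cosh t / Real.sinh t < a * Real.cosh a / Real.sinh a := hmono
        _ = Real.sqrt 2 * a := hfa
    exact div_lt_div_of_pos_right hlt hpi
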